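/- Let (s_i)_{i∈ℕ₀} be an arbitrary real sequence. Then there exist (positive Borel) measures μ⁺ and μ⁻ on [0,∞) such that for every i ∈ ℕ₀ the function x ↦ x^i is integrable with respect to both μ⁺ and μ⁻ and s_i = ∫_{[0,∞)} x^i dμ⁺(x) − ∫_{[0,∞)} x^i dμ⁻(x). In particular, every real sequence is the moment sequence of a signed measure on [0,∞) (and hence also of a signed measure on ℝ). -/

import Mathlib

open MeasureTheory Finset Matrix
open scoped ENNReal NNReal

namespace Boas

lemma exists_w (n : ℕ) : ∃ w : Fin (n+1) → ℝ,
    ∀ j : Fin (n+1), ∑ k, w k * ((k:ℝ)+1)^(j:ℕ) = if (j:ℕ) = n then 1 else 0 := by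
  set v : Fin (n+1) → ℝ := fun k => (k:ℝ)+1 with hv
  have hinj : Function.Injective v := by
    intro a b h
    simp only [hv] at h
    have : ((a:ℕ):ℝ) = ((b:ℕ):ℝ) := by linarith
    exact Fin.ext (Nat.cast_injective this)
  set M : Matrix (Fin (n+1)) (Fin (n+1)) ℝ := Matrix.transpose (Matrix.vandermonde v) with hM
  have hdet : IsUnit M.det := by
    rw [hM, Matrix.det_transpose]
    exact (Matrix.det_vandermonde_ne_zero_iff.mpr hinj).isUnit
  refine ⟨M⁻¹ *ᵥ Pi.single (Fin.last n) 1, fun j => ?_⟩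
  have h1 : M *ᵥ (M⁻¹ *ᵥ Pi.single (Fin.last n) 1) = Pi.single (Fin.last n) 1 := by
    rw [Matrix.mulVec_mulVec, Matrix.mul_nonsing_inv _ hdet, Matrix.one_mulVec]
  have h2 := congrFun h1 j
  have h3 : (M *ᵥ (M⁻¹ *ᵥ Pi.single (Fin.last n) 1)) j
      = ∑ k, (M⁻¹ *ᵥ Pi.single (Fin.last n) 1) k * ((k:ℝ)+1)^(j:ℕ) := by
    simp [Matrix.mulVec, dotProduct, hM, Matrix.vandermonde, hv, mul_comm]
  rw [h3] at h2
  rw [h2]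
  rcases eq_or_ne j (Fin.last n) with h | h
  · subst h; simp
  · have : (j:ℕ) ≠ n := fun hc => h (Fin.ext hc)
    simp [Pi.single_eq_of_ne h, this]

noncomputable def wv (n : ℕ) : Fin (n+1) → ℝ := (exists_w n).choose

lemma wv_sum (n i : ℕ) (hi : i ≤ n) :
    ∑ k, wv n k * ((k:ℝ)+1)^i = if i = n then 1 else 0 := by
  have := (exists_w n).choose_spec ⟨i, Nat.lt_succ_of_le hi⟩
  simpa [wv] using this

/-- total variation of the normalized stage weights -/
noncomputable def W (n : ℕ) : ℝ := ∑ k, |wv n k|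

lemma W_nonneg (n : ℕ) : 0 ≤ W n := Finset.sum_nonneg fun k _ => abs_nonneg _

/-- constant controlling the choice of scale -/
noncomputable def B (n : ℕ) : ℝ := W n * ((n:ℝ)+1)^n * 2^n

lemma B_nonneg (n : ℕ) : 0 ≤ B n := by
  have h := W_nonneg n
  have h2 : (0:ℝ) ≤ ((n:ℝ)+1)^n := by positivity
  have h3 : (0:ℝ) ≤ (2:ℝ)^n := by positivity
  exact mul_nonneg (mul_nonneg h h2) h3

/-- the scale used at stage `n` when the target moment correction is `t` -/
noncomputable def Rf (n : ℕ) (t : ℝ) : ℝ := 1 + |t| * B n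

lemma one_le_Rf (n : ℕ) (t : ℝ) : 1 ≤ Rf n t := by
  have h1 : 0 ≤ |t| * B n := mul_nonneg (abs_nonneg _) (B_nonneg n)
  simp [Rf]; linarith

lemma Rf_pos (n : ℕ) (t : ℝ) : 0 < Rf n t := lt_of_lt_of_le one_pos (one_le_Rf n t)

/-- the `i`-th moment of the stage-`m` signed atomic measure with correction `t` -/
noncomputable def sm (m : ℕ) (t : ℝ) (i : ℕ) : ℝ :=
  ∑ k : Fin (m+1), (t / (Rf m t)^m * wv m k) * (Rf m t * ((k:ℝ)+1))^i

lemma sm_factor (m : ℕ) (t : ℝ) (i : ℕ) :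
    sm m t i = (t / (Rf m t)^m * (Rf m t)^i) * ∑ k, wv m k * ((k:ℝ)+1)^i := by
  rw [sm, Finset.mul_sum]
  congr 1; funext k
  rw [mul_pow]; ring

lemma sm_of_lt (m : ℕ) (t : ℝ) (i : ℕ) (h : i < m) : sm m t i = 0 := by
  rw [sm_factor, wv_sum m i h.le, if_neg h.ne, mul_zero]

lemma sm_self (m : ℕ) (t : ℝ) : sm m t m = t := by
  rw [sm_factor, wv_sum m m le_rfl, if_pos rfl, mul_one]
  have h := (Rf_pos m t).ne'
  field_simp

/-- the absolute `i`-th moment of the stage-`m` measure -/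
noncomputable def asm (m : ℕ) (t : ℝ) (i : ℕ) : ℝ :=
  ∑ k : Fin (m+1), |t / (Rf m t)^m * wv m k| * (Rf m t * ((k:ℝ)+1))^i

lemma asm_nonneg (m : ℕ) (t : ℝ) (i : ℕ) : 0 ≤ asm m t i := by
  refine Finset.sum_nonneg fun k _ => mul_nonneg (abs_nonneg _) ?_
  have := (Rf_pos m t).le
  positivity

lemma abs_sm_le_asm (m : ℕ) (t : ℝ) (i : ℕ) : |sm m t i| ≤ asm m t i := by
  refine (Finset.abs_sum_le_sum_abs _ _).trans (Finset.sum_le_sum fun k _ => ?_)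
  rw [abs_mul]
  have hpt : (0:ℝ) ≤ Rf m t * ((k:ℝ)+1) := by
    have := (Rf_pos m t).le; positivity
  rw [abs_pow, abs_of_nonneg hpt]

lemma asm_le (m : ℕ) (t : ℝ) (i : ℕ) (h : i < m) : asm m t i ≤ (1/2)^m := by
  set R := Rf m t with hR
  have hR1 : 1 ≤ R := one_le_Rf m t
  have hR0 : 0 < R := Rf_pos m t
  have step1 : asm m t i = (|t| / R^m * R^i) * ∑ k : Fin (m+1), |wv m k| * ((k:ℝ)+1)^i := by
    rw [asm, Finset.mul_sum]
    congr 1; funext k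
    rw [mul_pow, abs_mul, abs_div, abs_pow, abs_of_nonneg hR0.le]
    ring
  have step2 : ∑ k : Fin (m+1), |wv m k| * ((k:ℝ)+1)^i ≤ W m * ((m:ℝ)+1)^m := by
    rw [W, Finset.sum_mul]
    refine Finset.sum_le_sum fun k _ => ?_
    refine mul_le_mul_of_nonneg_left ?_ (abs_nonneg _)
    calc ((k:ℝ)+1)^i ≤ ((m:ℝ)+1)^i := by
          refine pow_le_pow_left₀ (by positivity) ?_ i
          have : (k:ℕ) ≤ m := Nat.lt_succ_iff.mp k.2
          exact_mod_cast Nat.succ_le_succ this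
      _ ≤ ((m:ℝ)+1)^m := by
          refine pow_le_pow_right₀ (by linarith [Nat.cast_nonneg (α := ℝ) m]) h.le
  set u : ℝ := |t| * (W m * ((m:ℝ)+1)^m) with hu
  have hu0 : 0 ≤ u := by
    have := W_nonneg m
    have h2 : (0:ℝ) ≤ ((m:ℝ)+1)^m := by positivity
    exact mul_nonneg (abs_nonneg _) (mul_nonneg this h2)
  have hfac : 0 ≤ |t| / R^m * R^i := by positivity
  have step3 : asm m t i ≤ u * R^i / R^m := by
    rw [step1]
    calc (|t| / R^m * R^i) * ∑ k : Fin (m+1), |wv m k| * ((k:ℝ)+1)^i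
        ≤ (|t| / R^m * R^i) * (W m * ((m:ℝ)+1)^m) := mul_le_mul_of_nonneg_left step2 hfac
      _ = u * R^i / R^m := by rw [hu]; ring
  refine step3.trans ?_
  have h2m : (0:ℝ) < 2^m := by positivity
  have key : u * R^i * 2^m ≤ R^m := by
    have hRe : u * 2^m = R - 1 := by rw [hR, Rf, B, hu]; ring
    have h1 : u * 2^m ≤ R := by rw [hRe]; linarith
    calc u * R^i * 2^m = (u * 2^m) * R^i := by ring
      _ ≤ R * R^i := mul_le_mul_of_nonneg_right h1 (by positivity)
      _ = R^(i+1) := by ring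
      _ ≤ R^m := pow_le_pow_right₀ hR1 h
  rw [div_le_iff₀ (pow_pos hR0 m)]
  have hhalf : ((1:ℝ)/2)^m * R^m = R^m / 2^m := by
    rw [div_pow, one_pow]; ring
  rw [hhalf, le_div_iff₀ h2m]
  exact key


/-- the moment corrections, defined by strong recursion -/
noncomputable def dd (s : ℕ → ℝ) (n : ℕ) : ℝ :=
  s n - ∑ m ∈ (Finset.range n).attach,
    sm m (dd s m) n
termination_by n
decreasing_by exact Finset.mem_range.mp m.2

lemma dd_eq (s : ℕ → ℝ) (n : ℕ) :
    dd s n = s n - ∑ m ∈ Finset.range n, sm m (dd s m) n := by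
  rw [dd, Finset.sum_attach (Finset.range n) (fun m => sm m (dd s m) n)]

variable (s : ℕ → ℝ)

/-- mass of the `k`-th atom at stage `n` -/
noncomputable def a (n : ℕ) (k : Fin (n+1)) : ℝ :=
  dd s n / (Rf n (dd s n))^n * wv n k

/-- position of the `k`-th atom at stage `n` -/
noncomputable def pt (n : ℕ) (k : Fin (n+1)) : ℝ :=
  Rf n (dd s n) * ((k:ℝ)+1)

lemma pt_pos (n : ℕ) (k : Fin (n+1)) : 0 < pt s n k := by
  have h := Rf_pos n (dd s n)
  have : (0:ℝ) < (k:ℝ)+1 := by positivity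
  exact mul_pos h this

lemma sm_eq_sum (n i : ℕ) :
    sm n (dd s n) i = ∑ k : Fin (n+1), a s n k * (pt s n k)^i := rfl

lemma asm_eq_sum (n i : ℕ) :
    asm n (dd s n) i = ∑ k : Fin (n+1), |a s n k| * (pt s n k)^i := rfl

/-- the positive-part measure -/
noncomputable def μP : Measure ℝ :=
  Measure.sum fun n => ∑ k : Fin (n+1), ENNReal.ofReal (a s n k) • Measure.dirac (pt s n k)

/-- the negative-part measure -/
noncomputable def μN : Measure ℝ :=
  Measure.sum fun n => ∑ k : Fin (n+1), ENNReal.ofReal (-(a s n k)) • Measure.dirac (pt s n k)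


lemma lint_eq (b : (n : ℕ) → Fin (n+1) → ℝ) (i : ℕ) :
    ∫⁻ x, ‖x^i‖ₑ ∂(Measure.sum fun n =>
        ∑ k : Fin (n+1), ENNReal.ofReal (b n k) • Measure.dirac (pt s n k))
      = ∑' n, ∑ k : Fin (n+1), ENNReal.ofReal (b n k) * ENNReal.ofReal ((pt s n k)^i) := by
  rw [lintegral_sum_measure]
  congr 1; funext n
  rw [lintegral_finset_sum_measure]
  congr 1; funext k
  rw [lintegral_smul_measure, lintegral_dirac]
  congr 1
  exact Real.enorm_eq_ofReal (pow_nonneg (pt_pos s n k).le i)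

lemma stage_bound (b : (n : ℕ) → Fin (n+1) → ℝ) (hb : ∀ n k, b n k ≤ |a s n k|) (i n : ℕ) :
    ∑ k : Fin (n+1), ENNReal.ofReal (b n k) * ENNReal.ofReal ((pt s n k)^i)
      ≤ ENNReal.ofReal (asm n (dd s n) i) := by
  rw [asm_eq_sum, ENNReal.ofReal_sum_of_nonneg]
  · refine Finset.sum_le_sum fun k _ => ?_
    rw [ENNReal.ofReal_mul (abs_nonneg _)]
    exact mul_le_mul_left (ENNReal.ofReal_le_ofReal (hb n k)) _
  · intro k _
    exact mul_nonneg (abs_nonneg _) (pow_nonneg (pt_pos s n k).le i)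

lemma ennreal_tail (T : ℕ → ℝ≥0∞) (i : ℕ) (hfin : ∀ n, T n < ⊤)
    (hle : ∀ n : ℕ, T (n + (i+1)) ≤ ENNReal.ofReal ((1/2:ℝ)^n)) :
    (∑' n, T n) < ⊤ := by
  have hsplit := Summable.sum_add_tsum_nat_add' (f := T) (k := i+1) ENNReal.summable
  rw [← hsplit]
  have h1 : (∑ n ∈ Finset.range (i+1), T n) < ⊤ :=
    ENNReal.sum_lt_top.mpr fun n _ => hfin n
  have h2 : (∑' n, T (n + (i+1))) < ⊤ := by
    refine lt_of_le_of_lt (ENNReal.tsum_le_tsum hle) ?_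
    have he : ∀ n : ℕ, ENNReal.ofReal ((1/2:ℝ)^n) = (ENNReal.ofReal (1/2))^n := fun n =>
      ENNReal.ofReal_pow (by norm_num) n
    simp only [he]
    rw [ENNReal.tsum_geometric, ENNReal.inv_lt_top, tsub_pos_iff_lt]
    exact ENNReal.ofReal_lt_one.mpr (by norm_num)
  exact ENNReal.add_lt_top.mpr ⟨h1, h2⟩

lemma tsum_lt_top (b : (n : ℕ) → Fin (n+1) → ℝ) (hb : ∀ n k, b n k ≤ |a s n k|) (i : ℕ) :
    (∑' n, ∑ k : Fin (n+1), ENNReal.ofReal (b n k) * ENNReal.ofReal ((pt s n k)^i)) < ⊤ := by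
  refine ennreal_tail _ i (fun n => ?_) (fun n => ?_)
  · refine ENNReal.sum_lt_top.mpr fun k _ => ?_
    exact ENNReal.mul_lt_top ENNReal.ofReal_lt_top ENNReal.ofReal_lt_top
  · refine (stage_bound s b hb i (n + (i+1))).trans ?_
    refine ENNReal.ofReal_le_ofReal ?_
    have hlt : i < n + (i+1) := by omega
    refine (asm_le (n + (i+1)) (dd s (n + (i+1))) i hlt).trans ?_
    exact pow_le_pow_of_le_one (by norm_num) (by norm_num) (by omega)

lemma integrable_b (b : (n : ℕ) → Fin (n+1) → ℝ) (hb : ∀ n k, b n k ≤ |a s n k|) (i : ℕ) :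
    Integrable (fun x : ℝ => x^i)
      (Measure.sum fun n =>
        ∑ k : Fin (n+1), ENNReal.ofReal (b n k) • Measure.dirac (pt s n k)) := by
  refine ⟨(continuous_pow i).aestronglyMeasurable, ?_⟩
  rw [HasFiniteIntegral, lint_eq]
  exact tsum_lt_top s b hb i


lemma supp_zero (b : (n : ℕ) → Fin (n+1) → ℝ) :
    (Measure.sum fun n =>
        ∑ k : Fin (n+1), ENNReal.ofReal (b n k) • Measure.dirac (pt s n k))
      (Set.Ici (0:ℝ))ᶜ = 0 := by
  rw [Measure.sum_apply _ measurableSet_Ici.compl]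
  refine ENNReal.tsum_eq_zero.mpr fun n => ?_
  rw [Measure.finset_sum_apply]
  refine Finset.sum_eq_zero fun k _ => ?_
  rw [Measure.smul_apply, Measure.dirac_apply' _ measurableSet_Ici.compl]
  have : pt s n k ∈ Set.Ici (0:ℝ) := (pt_pos s n k).le
  rw [Set.indicator_of_notMem (by simpa using this)]
  simp

lemma toReal_ofReal_max (r : ℝ) : (ENNReal.ofReal r).toReal = max r 0 := by
  rcases le_total 0 r with h | h
  · rw [ENNReal.toReal_ofReal h, max_eq_left h]
  · rw [ENNReal.ofReal_of_nonpos h, max_eq_right h]; simp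

lemma integral_eq (b : (n : ℕ) → Fin (n+1) → ℝ) (hb : ∀ n k, b n k ≤ |a s n k|) (i : ℕ) :
    ∫ x, x^i ∂(Measure.sum fun n =>
        ∑ k : Fin (n+1), ENNReal.ofReal (b n k) • Measure.dirac (pt s n k))
      = ∑' n, ∑ k : Fin (n+1), max (b n k) 0 * (pt s n k)^i := by
  rw [integral_sum_measure (integrable_b s b hb i)]
  congr 1; funext n
  have hint : ∀ k : Fin (n+1), Integrable (fun x : ℝ => x^i)
      (ENNReal.ofReal (b n k) • Measure.dirac (pt s n k)) := by
    intro k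
    refine ⟨(continuous_pow i).aestronglyMeasurable, ?_⟩
    rw [HasFiniteIntegral, lintegral_smul_measure, lintegral_dirac]
    exact ENNReal.mul_lt_top ENNReal.ofReal_lt_top ENNReal.coe_lt_top
  rw [integral_finset_sum_measure (fun k _ => hint k)]
  congr 1; funext k
  rw [integral_smul_measure, integral_dirac, toReal_ofReal_max, smul_eq_mul]

lemma summable_stage (b : (n : ℕ) → Fin (n+1) → ℝ) (hb : ∀ n k, b n k ≤ |a s n k|)
    (hb0 : ∀ n k, 0 ≤ b n k) (i : ℕ) :
    Summable (fun n => ∑ k : Fin (n+1), b n k * (pt s n k)^i) := by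
  set S : ℕ → ℝ := fun n => ∑ k : Fin (n+1), b n k * (pt s n k)^i with hS
  have hS0 : ∀ n, 0 ≤ S n := fun n =>
    Finset.sum_nonneg fun k _ => mul_nonneg (hb0 n k) (pow_nonneg (pt_pos s n k).le i)
  have hSle : ∀ n, S n ≤ asm n (dd s n) i := by
    intro n
    rw [asm_eq_sum]
    refine Finset.sum_le_sum fun k _ => ?_
    exact mul_le_mul_of_nonneg_right (hb n k) (pow_nonneg (pt_pos s n k).le i)
  rw [← summable_nat_add_iff (i+1)]
  refine Summable.of_nonneg_of_le (fun n => hS0 _) (fun n => ?_) summable_geometric_two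
  refine (hSle (n + (i+1))).trans ?_
  refine (asm_le (n + (i+1)) (dd s (n + (i+1))) i (by omega)).trans ?_
  exact pow_le_pow_of_le_one (by norm_num) (by norm_num) (by omega)

theorem main (i : ℕ) :
    s i = (∫ x, x^i ∂(μP s)) - ∫ x, x^i ∂(μN s) := by
  have hbP : ∀ n k, max (a s n k) 0 ≤ |a s n k| := fun n k =>
    max_le (le_abs_self _) (abs_nonneg _)
  have hbN : ∀ n k, max (-(a s n k)) 0 ≤ |a s n k| := fun n k =>
    max_le (neg_le_abs _) (abs_nonneg _)
  have h1 : ∫ x, x^i ∂(μP s) = ∑' n, ∑ k : Fin (n+1), max (a s n k) 0 * (pt s n k)^i := by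
    have := integral_eq s (fun n k => a s n k) (fun n k => le_abs_self _) i
    rw [μP]; exact this
  have h2 : ∫ x, x^i ∂(μN s) = ∑' n, ∑ k : Fin (n+1), max (-(a s n k)) 0 * (pt s n k)^i := by
    have := integral_eq s (fun n k => -(a s n k)) (fun n k => neg_le_abs _) i
    rw [μN]; exact this
  rw [h1, h2]
  rw [← Summable.tsum_sub (summable_stage s _ hbP (fun n k => le_max_right _ _) i)
      (summable_stage s _ hbN (fun n k => le_max_right _ _) i)]
  have hterm : ∀ n, (∑ k : Fin (n+1), max (a s n k) 0 * (pt s n k)^i)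
      - (∑ k : Fin (n+1), max (-(a s n k)) 0 * (pt s n k)^i) = sm n (dd s n) i := by
    intro n
    rw [sm_eq_sum, ← Finset.sum_sub_distrib]
    congr 1; funext k
    rw [← sub_mul, max_zero_sub_max_neg_zero_eq_self]
  simp only [hterm]
  have hvanish : ∀ n ∉ Finset.range (i+1), sm n (dd s n) i = 0 := by
    intro n hn
    exact sm_of_lt n (dd s n) i (by simpa [Finset.mem_range] using hn)
  rw [tsum_eq_sum hvanish, Finset.sum_range_succ, sm_self, dd_eq]
  ring

end Boas

/-- Boas' theorem: every real sequence `(s i)` is the moment sequence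
of a signed measure on `[0,∞)`, i.e. there are (positive) measures `μ⁺` and `μ⁻`
on `[0,∞)` with respect to which all monomials `x ^ i` are integrable and such that
`s i = ∫ x ^ i dμ⁺ − ∫ x ^ i dμ⁻` for all `i`. -/
theorem boas_theorem (s : ℕ → ℝ) :
    ∃ μp μn : Measure ℝ,
      μp (Set.Ici 0)ᶜ = 0 ∧ μn (Set.Ici 0)ᶜ = 0 ∧
      (∀ i : ℕ, IntegrableOn (fun x : ℝ => x ^ i) (Set.Ici 0) μp) ∧
      (∀ i : ℕ, IntegrableOn (fun x : ℝ => x ^ i) (Set.Ici 0) μn) ∧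
      ∀ i : ℕ, s i =
        (∫ x in Set.Ici (0 : ℝ), x ^ i ∂μp) - ∫ x in Set.Ici (0 : ℝ), x ^ i ∂μn := by
  refine ⟨Boas.μP s, Boas.μN s, ?_, ?_, ?_, ?_, ?_⟩
  case _ => rw [Boas.μP]; exact Boas.supp_zero s _
  case _ => rw [Boas.μN]; exact Boas.supp_zero s _
  case _ =>
    intro i
    have h : Integrable (fun x : ℝ => x ^ i) (Boas.μP s) := by
      rw [Boas.μP]; exact Boas.integrable_b s _ (fun n k => le_abs_self _) i
    exact h.integrableOn
  case _ =>
    intro i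
    have h : Integrable (fun x : ℝ => x ^ i) (Boas.μN s) := by
      rw [Boas.μN]; exact Boas.integrable_b s _ (fun n k => neg_le_abs _) i
    exact h.integrableOn
  case _ =>
    intro i
    have hP : (Boas.μP s).restrict (Set.Ici 0) = Boas.μP s := by
      refine Measure.restrict_eq_self_of_ae_mem ?_
      refine mem_ae_iff.mpr ?_
      rw [Boas.μP]; exact Boas.supp_zero s _
    have hN : (Boas.μN s).restrict (Set.Ici 0) = Boas.μN s := by
      refine Measure.restrict_eq_self_of_ae_mem ?_
      refine mem_ae_iff.mpr ?_
      rw [Boas.μN]; exact Boas.supp_zero s _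
    rw [hP, hN]
    exact Boas.main s i
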